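/- Let x, ξ : ℝ≥0 → ℝⁿ be differentiable and θ, ν : ℝ≥0 → ℝᵈ be differentiable, H = Hᵀ > 0, and suppose: θ' = S(θ), x' − ξ' = −λ(t)(x−ξ) + B(t)(θ−ν), ν' = S(ν) + H⁻¹ B(t)ᵀ(x−ξ), where S : ℝᵈ → ℝᵈ is C¹ with H·DS(z)+DS(z)ᵀH ≤ 0 for all z, B : ℝ≥0 → ℝ^{n×d} is continuous, and λ : ℝ≥0 → ℝ is continuous with λ(t) ≥ 1 for all t. Then V(t) = (1/2)‖x(t)−ξ(t)‖² + (1/2)(θ(t)−ν(t))ᵀH(θ(t)−ν(t)) is nonincreasing, t ↦ √(λ(t))‖x(t)−ξ(t)‖ belongs to L², and in particular x − ξ ∈ L². -/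

import Mathlib

open MeasureTheory Set Matrix

/-- Squared Euclidean norm. -/
def esq {n : ℕ} (v : Fin n → ℝ) : ℝ := ∑ i, (v i) ^ 2

/-- Jacobian of S at z. -/
noncomputable def jac {d : ℕ} (S : (Fin d → ℝ) → (Fin d → ℝ)) (z : Fin d → ℝ) :
    Matrix (Fin d) (Fin d) ℝ :=
  Matrix.of fun i j => fderiv ℝ S z (Pi.single j 1) i

lemma esq_eq_dot {n : ℕ} (v : Fin n → ℝ) : esq v = v ⬝ᵥ v := by
  simp [esq, dotProduct, sq]

lemma esq_nonneg' {n : ℕ} (v : Fin n → ℝ) : 0 ≤ esq v :=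
  Finset.sum_nonneg fun i _ => sq_nonneg _

lemma symm_dot {d : ℕ} {H : Matrix (Fin d) (Fin d) ℝ} (hHsymm : H.IsSymm)
    (u v : Fin d → ℝ) : u ⬝ᵥ H.mulVec v = v ⬝ᵥ H.mulVec u := by
  rw [Matrix.dotProduct_mulVec, ← Matrix.mulVec_transpose, hHsymm.eq, dotProduct_comm]

lemma transp_dot {m k : ℕ} (A : Matrix (Fin m) (Fin k) ℝ) (u : Fin k → ℝ) (v : Fin m → ℝ) :
    u ⬝ᵥ Aᵀ.mulVec v = (A.mulVec u) ⬝ᵥ v := by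
  rw [Matrix.dotProduct_mulVec, Matrix.vecMul_transpose]

lemma quad_nonpos {d : ℕ} {H M : Matrix (Fin d) (Fin d) ℝ} (hHsymm : H.IsSymm)
    (hneg : (-(H * M + Mᵀ * H)).PosSemidef) (w : Fin d → ℝ) :
    w ⬝ᵥ H.mulVec (M.mulVec w) ≤ 0 := by
  have h := hneg.dotProduct_mulVec_nonneg w
  simp only [star_trivial, Matrix.neg_mulVec, Matrix.add_mulVec, dotProduct_neg,
    dotProduct_add, ← Matrix.mulVec_mulVec] at h
  have h2 : w ⬝ᵥ Mᵀ.mulVec (H.mulVec w) = w ⬝ᵥ H.mulVec (M.mulVec w) := by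
    rw [transp_dot, symm_dot hHsymm w (M.mulVec w)]
  rw [h2] at h
  linarith

lemma jac_mulVec {d : ℕ} {S : (Fin d → ℝ) → (Fin d → ℝ)} (z v : Fin d → ℝ) :
    (jac S z).mulVec v = fderiv ℝ S z v := by
  funext i
  have hv : v = ∑ j, v j • (Pi.single j 1 : Fin d → ℝ) := by
    funext k; simp [Finset.sum_apply, Pi.single_apply]
  conv_rhs => rw [hv]
  simp [jac, Matrix.mulVec, dotProduct, map_sum, _root_.map_smul, Finset.sum_apply, mul_comm]

lemma hasDerivAt_dot {m k : ℕ} (A : Matrix (Fin m) (Fin k) ℝ)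
    {u : ℝ → Fin m → ℝ} {v : ℝ → Fin k → ℝ} {u' : Fin m → ℝ} {v' : Fin k → ℝ} {t : ℝ}
    (hu : HasDerivAt u u' t) (hv : HasDerivAt v v' t) :
    HasDerivAt (fun s => u s ⬝ᵥ A.mulVec (v s))
      (u' ⬝ᵥ A.mulVec (v t) + u t ⬝ᵥ A.mulVec v') t := by
  have hu' := hasDerivAt_pi.1 hu
  have hv' := hasDerivAt_pi.1 hv
  have key : HasDerivAt (fun s => ∑ i, ∑ j, u s i * (A i j * v s j))
      (∑ i, ∑ j, (u' i * (A i j * v t j) + u t i * (A i j * v' j))) t := by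
    apply HasDerivAt.fun_sum; intro i _; apply HasDerivAt.fun_sum; intro j _
    exact (hu' i).mul ((hv' j).const_mul (A i j))
  have hfun : (fun s => u s ⬝ᵥ A.mulVec (v s))
      = fun s => ∑ i, ∑ j, u s i * (A i j * v s j) := by
    funext s; simp [dotProduct, Matrix.mulVec, Finset.mul_sum]
  have heq : u' ⬝ᵥ A.mulVec (v t) + u t ⬝ᵥ A.mulVec v'
      = ∑ i, ∑ j, (u' i * (A i j * v t j) + u t i * (A i j * v' j)) := by
    simp [dotProduct, Matrix.mulVec, Finset.mul_sum, Finset.sum_add_distrib]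
  rw [hfun, heq]; exact key

lemma continuous_dot {m k : ℕ} (A : Matrix (Fin m) (Fin k) ℝ)
    {u : ℝ → Fin m → ℝ} {v : ℝ → Fin k → ℝ}
    (hu : Continuous u) (hv : Continuous v) :
    Continuous fun t => u t ⬝ᵥ A.mulVec (v t) := by
  simp only [dotProduct, Matrix.mulVec]
  exact continuous_finset_sum _ fun i _ => ((continuous_apply i).comp hu).mul
    (continuous_finset_sum _ fun j _ => continuous_const.mul ((continuous_apply j).comp hv))

lemma oneSided {d : ℕ} {H : Matrix (Fin d) (Fin d) ℝ} (hHsymm : H.IsSymm)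
    {S : (Fin d → ℝ) → (Fin d → ℝ)} (hS : ContDiff ℝ 1 S)
    (hneg : ∀ z : Fin d → ℝ, (-(H * jac S z + (jac S z)ᵀ * H)).PosSemidef)
    (a b : Fin d → ℝ) : (a - b) ⬝ᵥ H.mulVec (S a - S b) ≤ 0 := by
  set v : Fin d → ℝ := a - b with hvdef
  have hline : ∀ s : ℝ, HasDerivAt (fun r : ℝ => S (b + r • v))
      ((jac S (b + s • v)).mulVec v) s := by
    intro s
    have h1 : HasDerivAt (fun r : ℝ => b + r • v) v s := by
      simpa using ((hasDerivAt_id s).smul_const v).const_add b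
    have h2 := (hS.differentiable one_ne_zero (b + s • v)).hasFDerivAt
    rw [jac_mulVec]
    exact h2.comp_hasDerivAt s h1
  set g : ℝ → ℝ := fun s => v ⬝ᵥ H.mulVec (S (b + s • v) - S b) with hgdef
  have hg : ∀ s : ℝ, HasDerivAt g
      (v ⬝ᵥ H.mulVec ((jac S (b + s • v)).mulVec v)) s := by
    intro s
    have := hasDerivAt_dot H (hasDerivAt_const s v) ((hline s).sub_const (S b))
    simpa using this
  have hg' : ∀ s, deriv g s ≤ 0 := by
    intro s
    rw [(hg s).deriv]
    exact quad_nonpos hHsymm (hneg _) v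
  have hanti : Antitone g :=
    antitone_of_deriv_nonpos (fun s => (hg s).differentiableAt) hg'
  have h10 := hanti (by norm_num : (0:ℝ) ≤ 1)
  have hg0 : g 0 = 0 := by simp [hgdef]
  have hg1 : g 1 = (a - b) ⬝ᵥ H.mulVec (S a - S b) := by
    simp [hgdef, hvdef]
  rw [hg0, hg1] at h10
  exact h10

/-- embedding lemma estimate. V = (1/2)‖x−ξ‖² + (1/2)‖θ−ν‖²_H is
nonincreasing, √λ‖x−ξ‖ ∈ L², and x−ξ ∈ L². -/
theorem embedding_estimate {n d : ℕ}
    (H : Matrix (Fin d) (Fin d) ℝ) (hHsymm : H.IsSymm) (hHpos : H.PosDef)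
    (S : (Fin d → ℝ) → (Fin d → ℝ)) (hS : ContDiff ℝ 1 S)
    (hneg : ∀ z : Fin d → ℝ, (-(H * jac S z + (jac S z)ᵀ * H)).PosSemidef)
    (B : ℝ → Matrix (Fin n) (Fin d) ℝ) (hB : Continuous B)
    (lam : ℝ → ℝ) (hlam : Continuous lam) (hlam1 : ∀ t, 1 ≤ lam t)
    (x ξ : ℝ → Fin n → ℝ) (θ ν : ℝ → Fin d → ℝ)
    (hθ : ∀ t, HasDerivAt θ (S (θ t)) t)
    (hxξ : ∀ t, HasDerivAt (fun s => x s - ξ s)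
      (-(lam t) • (x t - ξ t) + (B t).mulVec (θ t - ν t)) t)
    (hν : ∀ t, HasDerivAt ν
      (S (ν t) + H⁻¹.mulVec ((B t)ᵀ.mulVec (x t - ξ t))) t) :
    (AntitoneOn
      (fun t => (1 / 2) * esq (x t - ξ t) +
        (1 / 2) * ((θ t - ν t) ⬝ᵥ H.mulVec (θ t - ν t))) (Ici (0 : ℝ))) ∧
    IntegrableOn (fun t => (Real.sqrt (lam t) * Real.sqrt (esq (x t - ξ t))) ^ 2)
      (Ici (0 : ℝ)) ∧
    IntegrableOn (fun t => esq (x t - ξ t)) (Ici (0 : ℝ)) := by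
  have hHdet : IsUnit H.det := isUnit_iff_ne_zero.2 hHpos.det_pos.ne'
  have hinv : ∀ u : Fin d → ℝ, H.mulVec (H⁻¹.mulVec u) = u := by
    intro u
    rw [Matrix.mulVec_mulVec, Matrix.mul_nonsing_inv _ hHdet, Matrix.one_mulVec]
  set V : ℝ → ℝ := fun t => (1 / 2) * esq (x t - ξ t) +
      (1 / 2) * ((θ t - ν t) ⬝ᵥ H.mulVec (θ t - ν t)) with hVdef
  set Vd : ℝ → ℝ := fun t => -(lam t) * esq (x t - ξ t) +
      (θ t - ν t) ⬝ᵥ H.mulVec (S (θ t) - S (ν t)) with hVddef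
  have hw : ∀ t, HasDerivAt (fun s => θ s - ν s)
      (S (θ t) - (S (ν t) + H⁻¹.mulVec ((B t)ᵀ.mulVec (x t - ξ t)))) t :=
    fun t => (hθ t).sub (hν t)
  -- V has derivative Vd
  have hV : ∀ t, HasDerivAt V (Vd t) t := by
    intro t
    have hd1 := hasDerivAt_dot (1 : Matrix (Fin n) (Fin n) ℝ) (hxξ t) (hxξ t)
    have hd2 := hasDerivAt_dot H (hw t) (hw t)
    have hsum := (hd1.const_mul ((1:ℝ)/2)).add (hd2.const_mul ((1:ℝ)/2))
    simp only [Matrix.one_mulVec] at hsum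
    have hkey : (1/2 : ℝ) * ((-(lam t) • (x t - ξ t) + (B t).mulVec (θ t - ν t)) ⬝ᵥ (x t - ξ t)
          + (x t - ξ t) ⬝ᵥ (-(lam t) • (x t - ξ t) + (B t).mulVec (θ t - ν t)))
        + (1/2 : ℝ) * ((S (θ t) - (S (ν t) + H⁻¹.mulVec ((B t)ᵀ.mulVec (x t - ξ t)))) ⬝ᵥ
            H.mulVec (θ t - ν t)
          + (θ t - ν t) ⬝ᵥ H.mulVec (S (θ t) - (S (ν t) + H⁻¹.mulVec ((B t)ᵀ.mulVec (x t - ξ t)))))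
        = -(lam t) * esq (x t - ξ t) + (θ t - ν t) ⬝ᵥ H.mulVec (S (θ t) - S (ν t)) := by
      have c1 : (-(lam t) • (x t - ξ t) + (B t).mulVec (θ t - ν t)) ⬝ᵥ (x t - ξ t)
          = (x t - ξ t) ⬝ᵥ (-(lam t) • (x t - ξ t) + (B t).mulVec (θ t - ν t)) :=
        dotProduct_comm _ _
      have c2 : (S (θ t) - (S (ν t) + H⁻¹.mulVec ((B t)ᵀ.mulVec (x t - ξ t)))) ⬝ᵥ
            H.mulVec (θ t - ν t)
          = (θ t - ν t) ⬝ᵥ H.mulVec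
            (S (θ t) - (S (ν t) + H⁻¹.mulVec ((B t)ᵀ.mulVec (x t - ξ t)))) :=
        symm_dot hHsymm _ _
      have c3 : (x t - ξ t) ⬝ᵥ (-(lam t) • (x t - ξ t) + (B t).mulVec (θ t - ν t))
          = -(lam t) * ((x t - ξ t) ⬝ᵥ (x t - ξ t))
            + (x t - ξ t) ⬝ᵥ (B t).mulVec (θ t - ν t) := by
        rw [dotProduct_add, dotProduct_smul, smul_eq_mul]
      have c4 : (θ t - ν t) ⬝ᵥ H.mulVec
            (S (θ t) - (S (ν t) + H⁻¹.mulVec ((B t)ᵀ.mulVec (x t - ξ t))))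
          = (θ t - ν t) ⬝ᵥ H.mulVec (S (θ t) - S (ν t))
            - (x t - ξ t) ⬝ᵥ (B t).mulVec (θ t - ν t) := by
        have hW2 : S (θ t) - (S (ν t) + H⁻¹.mulVec ((B t)ᵀ.mulVec (x t - ξ t)))
            = (S (θ t) - S (ν t)) - H⁻¹.mulVec ((B t)ᵀ.mulVec (x t - ξ t)) := by
          abel
        rw [hW2, Matrix.mulVec_sub, dotProduct_sub, hinv, transp_dot,
          dotProduct_comm ((B t).mulVec (θ t - ν t)) (x t - ξ t)]
      rw [c1, c2, c3, c4, esq_eq_dot]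
      ring
    rw [hkey] at hsum
    have hfun : V = fun s => (1/2 : ℝ) * ((x s - ξ s) ⬝ᵥ (x s - ξ s)) +
        (1/2 : ℝ) * ((θ s - ν s) ⬝ᵥ H.mulVec (θ s - ν s)) := by
      funext s; simp [hVdef, esq_eq_dot]
    rw [hfun]
    simp only [hVddef]
    exact hsum
  -- derivative bound
  have hVd_le : ∀ t, Vd t ≤ -(lam t) * esq (x t - ξ t) := by
    intro t
    have h1 := oneSided hHsymm hS hneg (θ t) (ν t)
    simp only [hVddef]
    linarith
  have hVd_nonpos : ∀ t, Vd t ≤ 0 := by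
    intro t
    have h2 := esq_nonneg' (x t - ξ t)
    have h3 := hlam1 t
    have := hVd_le t
    nlinarith
  -- part 1
  have hanti : AntitoneOn V (Ici (0:ℝ)) := by
    apply antitoneOn_of_deriv_nonpos (convex_Ici 0)
    · exact fun t _ => (hV t).differentiableAt.continuousAt.continuousWithinAt
    · exact fun t _ => (hV t).differentiableAt.differentiableWithinAt
    · exact fun t _ => by rw [(hV t).deriv]; exact hVd_nonpos t
  -- continuity facts
  have hxc : Continuous fun t => x t - ξ t :=
    Differentiable.continuous fun t => (hxξ t).differentiableAt
  have hθc : Continuous θ := Differentiable.continuous fun t => (hθ t).differentiableAt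
  have hνc : Continuous ν := Differentiable.continuous fun t => (hν t).differentiableAt
  have hesqc : Continuous fun t => esq (x t - ξ t) := by
    unfold esq
    exact continuous_finset_sum _ fun i _ => ((continuous_apply i).comp hxc).pow 2
  have hVdc : Continuous Vd := by
    rw [hVddef]
    exact (hlam.neg.mul hesqc).add (continuous_dot H (hθc.sub hνc)
      ((hS.continuous.comp hθc).sub (hS.continuous.comp hνc)))
  set f : ℝ → ℝ := fun t => lam t * esq (x t - ξ t) with hfdef
  have hfc : Continuous f := hlam.mul hesqc
  have hfnn : ∀ t, 0 ≤ f t := fun t =>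
    mul_nonneg (le_trans zero_le_one (hlam1 t)) (esq_nonneg' _)
  have hV0 : ∀ t, 0 ≤ V t := by
    intro t
    have h1 := esq_nonneg' (x t - ξ t)
    have h2 : 0 ≤ (θ t - ν t) ⬝ᵥ H.mulVec (θ t - ν t) := by
      simpa using hHpos.posSemidef.dotProduct_mulVec_nonneg (θ t - ν t)
    simp only [hVdef]
    linarith
  -- interval bound
  have hbound : ∀ T : ℝ, 0 ≤ T → (∫ t in (0:ℝ)..T, f t) ≤ V 0 := by
    intro T hT
    have hftc : ∫ t in (0:ℝ)..T, Vd t = V T - V 0 :=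
      intervalIntegral.integral_eq_sub_of_hasDerivAt (fun t _ => hV t)
        (hVdc.intervalIntegrable 0 T)
    have hmono : (∫ t in (0:ℝ)..T, f t) ≤ ∫ t in (0:ℝ)..T, -Vd t := by
      apply intervalIntegral.integral_mono_on hT (hfc.intervalIntegrable 0 T)
        (hVdc.neg.intervalIntegrable 0 T)
      intro t _
      have := hVd_le t
      simp only [hfdef, Pi.neg_apply]
      nlinarith [hlam1 t, esq_nonneg' (x t - ξ t)]
    have hneg' : (∫ t in (0:ℝ)..T, -Vd t) = V 0 - V T := by
      rw [intervalIntegral.integral_neg, hftc]; ring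
    have := hV0 T
    linarith [hmono, hneg'.le]
  -- integrability on Ici 0
  have hfint : IntegrableOn f (Ici (0:ℝ)) := by
    rw [integrableOn_Ici_iff_integrableOn_Ioi]
    apply integrableOn_Ioi_of_intervalIntegral_norm_bounded (V 0) 0
      (fun T : ℝ => (hfc.integrableOn_Icc (a := 0) (b := T)).mono_set Ioc_subset_Icc_self)
      Filter.tendsto_id
    filter_upwards [Filter.eventually_ge_atTop (0:ℝ)] with T hT
    have heqn : (∫ t in (0:ℝ)..T, ‖f t‖) = ∫ t in (0:ℝ)..T, f t := by
      apply intervalIntegral.integral_congr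
      intro t _
      exact Real.norm_of_nonneg (hfnn t)
    rw [heqn]
    exact hbound T hT
  refine ⟨hanti, ?_, ?_⟩
  · have heq2 : (fun t => (Real.sqrt (lam t) * Real.sqrt (esq (x t - ξ t))) ^ 2) = f := by
      funext t
      rw [mul_pow, Real.sq_sqrt (le_trans zero_le_one (hlam1 t)),
        Real.sq_sqrt (esq_nonneg' _)]
    rw [heq2]
    exact hfint
  · apply Integrable.mono' hfint (hesqc.aestronglyMeasurable)
    filter_upwards with t
    rw [Real.norm_of_nonneg (esq_nonneg' _)]
    simp only [hfdef]
    nlinarith [hlam1 t, esq_nonneg' (x t - ξ t)]
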